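/- Let C ⊂ F^{m-1} be a 1-code (a code with minimum distance ≥ 3), and Ċ = {(1,x) : x ∈ C} ⊂ A. Then the cosets R_δ + δ̄ − e^{(δ)}, δ ∈ Ċ, are pairwise disjoint subsets of the Hamming code H_m. -/

import Mathlib

variable {F : Type*} [Field F] [Fintype F] [DecidableEq F] {m : ℕ}

def IsProj (α : Fin m → F) : Prop :=
  ∃ i, α i = 1 ∧ ∀ j < i, α j = 0

instance : DecidablePred (IsProj (F := F) (m := m)) :=
  fun α => decidable_of_iff (∃ i, α i = 1 ∧ ∀ j < i, α j = 0) Iff.rfl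

/-- The projective points: nonzero vectors with first nonzero coordinate 1. -/
abbrev PA (F : Type*) [Field F] [Fintype F] [DecidableEq F] (m : ℕ) : Type _ :=
  {α : Fin m → F // IsProj α}

/-- The Hamming code of length (q^m-1)/(q-1). -/
def Hcode (F : Type*) [Field F] [Fintype F] [DecidableEq F] (m : ℕ) : Set (PA F m → F) :=
  {c | ∑ α : PA F m, c α • (α : Fin m → F) = 0}

/-- Zero-extension of a vector of F^m to a word indexed by PA F m. -/
def bar (α : Fin m → F) : PA F m → F :=
  fun β => ∑ i, if (β : Fin m → F) = Pi.single i 1 then α i else 0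

/-- The linear δ-component: span of the weight-3 codewords with value 1 at δ. -/
def Rcomp (δ : PA F m) : Submodule F (PA F m → F) :=
  Submodule.span F {c | c ∈ Hcode F m ∧ hammingNorm c = 3 ∧ c δ = 1}

/-- A 1-perfect code: radius-1 balls around codewords partition the space. -/
def IsPerfect {ι : Type*} [Fintype ι] (P : Set (ι → F)) : Prop :=
  ∀ z : ι → F, ∃! c, c ∈ P ∧ hammingDist z c ≤ 1

/-- A 1-code: radius-1 balls around codewords are pairwise disjoint. -/
def IsOneCode {ι : Type*} [Fintype ι] (C : Set (ι → F)) : Prop :=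
  ∀ x ∈ C, ∀ y ∈ C, x ≠ y → ∀ z, ¬(hammingDist x z ≤ 1 ∧ hammingDist y z ≤ 1)

/-- The radius-1 neighborhood of a set of words. -/
def nbhd {ι : Type*} [Fintype ι] (M : Set (ι → F)) : Set (ι → F) :=
  {y | ∃ x ∈ M, hammingDist x y ≤ 1}

/-- The projective point corresponding to the standard basis vector π^(i). -/
def singleProj (i : Fin m) : PA F m :=
  ⟨Pi.single i 1, i, by simp, fun j hj => Pi.single_eq_of_ne (Fin.ne_of_lt hj) 1⟩

/-- The projective point (1, x). -/
def consProj {s : ℕ} (x : Fin s → F) : PA F (s+1) :=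
  ⟨Fin.cons 1 x, 0, by simp, fun j hj => absurd hj (by simp)⟩

/-- The δ-component of the Hamming code associated with x, for δ = (1,x). -/
def compCoset {s : ℕ} (x : Fin s → F) : Set (PA F (s+1) → F) :=
  (· + (bar (Fin.cons 1 x) - Pi.single (consProj x) 1)) '' (Rcomp (consProj x) : Set (PA F (s+1) → F))

/-! ### auxiliary -/

/-- The syndrome map. -/
def synd : (PA F m → F) →ₗ[F] (Fin m → F) where
  toFun c := ∑ α : PA F m, c α • (α : Fin m → F)
  map_add' u v := by simp [add_smul, Finset.sum_add_distrib]
  map_smul' a v := by simp [smul_smul, Finset.smul_sum]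

lemma mem_Hcode_iff {c : PA F m → F} : c ∈ Hcode F m ↔ synd c = 0 := Iff.rfl

/-- Key pairing computation for `bar`. -/
lemma bar_pairing {M : Type*} [AddCommMonoid M] [Module F M] (v : Fin m → F) (f : PA F m → M) :
    ∑ β : PA F m, bar v β • f β = ∑ i, v i • f (singleProj i) := by
  unfold bar
  simp_rw [Finset.sum_smul]
  rw [Finset.sum_comm]
  refine Finset.sum_congr rfl fun i _ => ?_
  rw [Finset.sum_eq_single (singleProj i)]
  · simp [singleProj]
  · intro β _ hβ
    rw [if_neg, zero_smul]
    exact fun h => hβ (Subtype.ext h)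
  · simp

lemma synd_bar (v : Fin m → F) : synd (bar v) = v := by
  show ∑ β : PA F m, bar v β • (β : Fin m → F) = v
  rw [bar_pairing]
  rw [show (∑ i, v i • ((singleProj i : PA F m) : Fin m → F))
      = ∑ i, (Pi.single i (v i) : Fin m → F) from
    Finset.sum_congr rfl fun i _ => by
      show v i • (Pi.single i (1:F) : Fin m → F) = (Pi.single i (v i) : Fin m → F)
      rw [← Pi.single_smul, smul_eq_mul, mul_one]]
  exact Finset.univ_sum_single v

lemma synd_single (δ : PA F m) : synd (Pi.single δ (1 : F)) = δ.val := by
  show ∑ β : PA F m, (Pi.single δ (1:F) : PA F m → F) β • (β : Fin m → F) = δ.val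
  rw [Finset.sum_eq_single δ]
  · simp
  · intro β _ hβ
    rw [Pi.single_eq_of_ne hβ, zero_smul]
  · simp

lemma Rcomp_le_ker (δ : PA F m) : Rcomp δ ≤ LinearMap.ker (synd (F := F) (m := m)) := by
  rw [Rcomp, Submodule.span_le]
  rintro c ⟨hc, -, -⟩
  exact hc


section coefAlong
variable {F : Type*} [Field F] {V : Type*} [AddCommGroup V] [Module F V]

/-- The coefficient of `v` along `u`, if `v` is a multiple of `u`; otherwise `0`.
This is a homogeneous (degree 1) but non-linear function. -/
noncomputable def coefAlong (u v : V) : F :=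
  letI := Classical.propDecidable (∃ t : F, v = t • u)
  if h : ∃ t : F, v = t • u then h.choose else 0

lemma coefAlong_smul_self {u : V} (hu : u ≠ 0) (t : F) : coefAlong u (t • u) = t := by
  have h : ∃ t' : F, t • u = t' • u := ⟨t, rfl⟩
  rw [coefAlong, dif_pos h]
  have hs := h.choose_spec
  have h0 : (t - h.choose) • u = 0 := by rw [sub_smul, ← hs, sub_self]
  rcases smul_eq_zero.mp h0 with h' | h'
  · exact (sub_eq_zero.mp h').symm
  · exact absurd h' hu

lemma coefAlong_zero {u : V} (hu : u ≠ 0) : coefAlong (F := F) u 0 = 0 := by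
  have := coefAlong_smul_self (F := F) hu 0
  rwa [zero_smul] at this

lemma coefAlong_self {u : V} (hu : u ≠ 0) : coefAlong (F := F) u u = 1 := by
  have := coefAlong_smul_self (F := F) hu 1
  rwa [one_smul] at this

lemma coefAlong_of_not {u v : V} (h : ¬∃ t : F, v = t • u) : coefAlong (F := F) u v = 0 := by
  rw [coefAlong, dif_neg h]

lemma coefAlong_smul {u : V} (hu : u ≠ 0) (a : F) (v : V) :
    coefAlong (F := F) u (a • v) = a * coefAlong (F := F) u v := by
  by_cases h : ∃ t : F, v = t • u
  · obtain ⟨t, rfl⟩ := h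
    rw [smul_smul, coefAlong_smul_self hu, coefAlong_smul_self hu]
  · rw [coefAlong_of_not h, mul_zero]
    rcases eq_or_ne a 0 with rfl | ha
    · rw [zero_smul, coefAlong_zero hu]
    · refine coefAlong_of_not fun ⟨t, ht⟩ => h ⟨a⁻¹ * t, ?_⟩
      rw [mul_smul, ← ht, inv_smul_smul₀ ha]

lemma coefAlong_pair {u : V} (hu : u ≠ 0) {a b : F} {p r : V} (h : a • p + b • r = 0) :
    a * coefAlong (F := F) u p + b * coefAlong (F := F) u r = 0 := by
  have hab : a • p = (-b) • r := by
    rw [neg_smul]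
    exact eq_neg_of_add_eq_zero_left h
  calc a * coefAlong (F := F) u p + b * coefAlong (F := F) u r
      = coefAlong (F := F) u (a • p) + coefAlong (F := F) u (b • r) := by
        rw [coefAlong_smul hu, coefAlong_smul hu]
    _ = coefAlong (F := F) u ((-b) • r) + coefAlong (F := F) u (b • r) := by rw [hab]
    _ = (-b) * coefAlong (F := F) u r + b * coefAlong (F := F) u r := by
        rw [coefAlong_smul hu, coefAlong_smul hu]
    _ = 0 := by ring

end coefAlong

/-- The linear functional on words given by a weight function. -/
def wordFunctional (f : PA F m → F) : (PA F m → F) →ₗ[F] F where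
  toFun v := ∑ β : PA F m, v β * f β
  map_add' u v := by simp [add_mul, Finset.sum_add_distrib]
  map_smul' a v := by simp [Finset.mul_sum, mul_assoc]

lemma wordFunctional_apply (f : PA F m → F) (v : PA F m → F) :
    wordFunctional f v = ∑ β : PA F m, v β * f β := rfl

lemma support_decomp {ι : Type*} [Fintype ι] [DecidableEq ι]
    (g : ι → F) (h3 : hammingNorm g = 3) (θ : ι) (hθ : g θ ≠ 0) :
    ∃ β₁ β₂ : ι, β₁ ≠ β₂ ∧ θ ∉ ({β₁, β₂} : Finset ι) ∧
      Finset.univ.filter (fun i => g i ≠ 0) = insert θ {β₁, β₂} := by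
  set s : Finset ι := Finset.univ.filter (fun i => g i ≠ 0) with hsdef
  have hs : s.card = 3 := h3
  have hθs : θ ∈ s := Finset.mem_filter.mpr ⟨Finset.mem_univ θ, hθ⟩
  obtain ⟨β₁, β₂, h12, hpair⟩ := Finset.card_eq_two.mp
    (by rw [Finset.card_erase_of_mem hθs, hs] : (s.erase θ).card = 2)
  refine ⟨β₁, β₂, h12, ?_, ?_⟩
  · rw [← hpair]
    exact Finset.notMem_erase θ s
  · rw [← hpair, Finset.insert_erase hθs]

lemma Rcomp_le_ker_wf (W : Submodule F (Fin m → F))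
    (u₀ : (Fin m → F) ⧸ W) (hu₀ : u₀ ≠ 0) (θ : PA F m) (hθ : θ.val ∈ W) :
    Rcomp θ ≤ LinearMap.ker (wordFunctional fun β => coefAlong (F := F) u₀ (W.mkQ β.val)) := by
  rw [Rcomp, Submodule.span_le]
  rintro g ⟨hg1, hg3, hgθ⟩
  have hg1' : ∑ β : PA F m, g β • (β : Fin m → F) = 0 := hg1
  have hgθ' : g θ ≠ 0 := by rw [hgθ]; exact one_ne_zero
  obtain ⟨β₁, β₂, h12, hθ12, hsupp⟩ := support_decomp g hg3 θ hgθ'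
  have h2 : ∑ β : PA F m, g β • W.mkQ β.val = 0 := by
    have h := congrArg W.mkQ hg1'
    rw [map_sum, map_zero] at h
    simpa using h
  have h2' : g β₁ • W.mkQ β₁.val + g β₂ • W.mkQ β₂.val = 0 := by
    rw [← Finset.sum_subset (Finset.subset_univ (Finset.univ.filter (fun β => g β ≠ 0)))
      (fun β _ hβ => by
        rw [not_not.mp (fun h => hβ (Finset.mem_filter.mpr ⟨Finset.mem_univ β, h⟩)), zero_smul]),
      hsupp, Finset.sum_insert hθ12, Finset.sum_pair h12,
      show W.mkQ θ.val = 0 from (Submodule.Quotient.mk_eq_zero W).mpr hθ] at h2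
    rwa [smul_zero, zero_add] at h2
  simp only [SetLike.mem_coe, LinearMap.mem_ker, wordFunctional_apply]
  rw [← Finset.sum_subset (Finset.subset_univ (Finset.univ.filter (fun β => g β ≠ 0)))
    (fun β _ hβ => by
      rw [not_not.mp (fun h => hβ (Finset.mem_filter.mpr ⟨Finset.mem_univ β, h⟩)), zero_mul]),
    hsupp, Finset.sum_insert hθ12, Finset.sum_pair h12]
  have hQθ : W.mkQ θ.val = 0 := (Submodule.Quotient.mk_eq_zero W).mpr hθ
  rw [hQθ, coefAlong_zero hu₀, mul_zero, zero_add]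
  exact coefAlong_pair hu₀ h2'

lemma wf_coset_value (W : Submodule F (Fin m → F))
    (u₀ : (Fin m → F) ⧸ W) (hu₀ : u₀ ≠ 0) (θ : PA F m) (hθ : θ.val ∈ W) :
    wordFunctional (fun β => coefAlong (F := F) u₀ (W.mkQ β.val))
        (bar θ.val - Pi.single θ 1)
      = ∑ i, θ.val i * coefAlong (F := F) u₀ (W.mkQ (Pi.single i 1)) := by
  set f : PA F m → F := fun β => coefAlong (F := F) u₀ (W.mkQ β.val) with hfdef
  rw [map_sub]
  have h2 : wordFunctional f (Pi.single θ 1) = f θ := by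
    rw [wordFunctional_apply, Finset.sum_eq_single θ]
    · simp
    · intro β _ hβ
      rw [Pi.single_eq_of_ne hβ, zero_mul]
    · simp
  have hfθ : f θ = 0 := by
    have hz : W.mkQ θ.val = 0 := (Submodule.Quotient.mk_eq_zero W).mpr hθ
    show coefAlong (F := F) u₀ (W.mkQ θ.val) = 0
    rw [hz, coefAlong_zero hu₀]
  rw [h2, hfθ, sub_zero, wordFunctional_apply]
  simp_rw [← smul_eq_mul]
  exact bar_pairing θ.val f

lemma onecode_dist {s : ℕ} {C : Set (Fin s → F)} (hC : IsOneCode C) {x y : Fin s → F}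
    (hx : x ∈ C) (hy : y ∈ C) (hxy : x ≠ y) : 3 ≤ hammingDist x y := by
  by_contra h
  push_neg at h
  obtain ⟨i, hi⟩ := Function.ne_iff.mp hxy
  set z := Function.update y i (x i) with hz
  have hyz : hammingDist y z ≤ 1 := by
    have hsub : (Finset.univ.filter fun j => y j ≠ z j) ⊆ {i} := by
      intro j hj
      rw [Finset.mem_filter] at hj
      rw [Finset.mem_singleton]
      by_contra hji
      exact hj.2 ((Function.update_of_ne hji (x i) y).symm)
    calc hammingDist y z = (Finset.univ.filter fun j => y j ≠ z j).card := rfl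
      _ ≤ ({i} : Finset (Fin s)).card := Finset.card_le_card hsub
      _ = 1 := Finset.card_singleton i
  have hxz : hammingDist x z ≤ 1 := by
    have heq : (Finset.univ.filter fun j => x j ≠ z j)
        = (Finset.univ.filter fun j => x j ≠ y j).erase i := by
      ext j
      rw [Finset.mem_erase, Finset.mem_filter, Finset.mem_filter]
      constructor
      · intro hj
        have hji : j ≠ i := by
          intro hji
          subst hji
          exact hj.2 (by rw [hz, Function.update_self])
        refine ⟨hji, Finset.mem_univ j, ?_⟩
        have h2 := hj.2
        rwa [hz, Function.update_of_ne hji] at h2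
      · rintro ⟨hji, -, hj⟩
        exact ⟨Finset.mem_univ j, by rwa [hz, Function.update_of_ne hji]⟩
    have hmem : i ∈ Finset.univ.filter fun j => x j ≠ y j :=
      Finset.mem_filter.mpr ⟨Finset.mem_univ i, hi⟩
    calc hammingDist x z = (Finset.univ.filter fun j => x j ≠ z j).card := rfl
      _ = (Finset.univ.filter fun j => x j ≠ y j).card - 1 := by
          rw [heq, Finset.card_erase_of_mem hmem]
      _ = hammingDist x y - 1 := rfl
      _ ≤ 1 := by omega
  exact hC x hx y hy hxy z ⟨hxz, hyz⟩

theorem stmt10 {s : ℕ} (C : Set (Fin s → F)) (hC : IsOneCode C) :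
    (∀ x ∈ C, compCoset x ⊆ Hcode F (s+1)) ∧
    (∀ x ∈ C, ∀ y ∈ C, x ≠ y → Disjoint (compCoset x) (compCoset y)) := by
  constructor
  · rintro x hx c ⟨r, hr, rfl⟩
    have hr0 : synd r = 0 := Rcomp_le_ker (consProj x) hr
    show synd (r + (bar (Fin.cons 1 x) - Pi.single (consProj x) 1)) = 0
    rw [map_add, map_sub, synd_bar, synd_single, hr0, zero_add]
    exact sub_eq_zero.mpr rfl
  · rintro x hx y hy hxy
    rw [Set.disjoint_left]
    rintro c ⟨r, hr, hc1⟩ ⟨r', hr', hc2⟩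
    have hd : 3 ≤ hammingDist x y := onecode_dist hC hx hy hxy
    set D : Fin (s+1) → F :=
      fun i => (Fin.cons 1 x : Fin (s+1) → F) i - (Fin.cons 1 y : Fin (s+1) → F) i with hD
    have hD0 : D 0 = 0 := by simp [hD]
    have hD3 : 3 ≤ (Finset.univ.filter fun i => D i ≠ 0).card := by
      calc 3 ≤ hammingDist x y := hd
        _ = (Finset.univ.filter fun j => x j ≠ y j).card := rfl
        _ ≤ (Finset.univ.filter fun i => D i ≠ 0).card := by
            refine Finset.card_le_card_of_injOn Fin.succ (fun j hj => ?_)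
              ((Fin.succ_injective s).injOn)
            rw [Finset.mem_coe, Finset.mem_filter] at hj ⊢
            refine ⟨Finset.mem_univ _, ?_⟩
            show (Fin.cons 1 x : Fin (s+1) → F) j.succ - (Fin.cons 1 y : Fin (s+1) → F) j.succ ≠ 0
            rw [Fin.cons_succ, Fin.cons_succ]
            exact sub_ne_zero_of_ne hj.2
    set W : Submodule F (Fin (s+1) → F) :=
      Submodule.span F {Fin.cons 1 x, Fin.cons 1 y} with hW
    have hδW : (Fin.cons 1 x : Fin (s+1) → F) ∈ W :=
      Submodule.subset_span (Set.mem_insert _ _)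
    have hγW : (Fin.cons 1 y : Fin (s+1) → F) ∈ W :=
      Submodule.subset_span (Set.mem_insert_of_mem _ rfl)
    have core : ∀ v ∈ W, v 0 = 0 → ∃ a : F, v = a • D := by
      intro v hv hv0
      obtain ⟨a, b, hab⟩ := Submodule.mem_span_pair.mp hv
      have h00 : a + b = 0 := by
        have h := congrFun hab 0
        simp only [Pi.add_apply, Pi.smul_apply, smul_eq_mul] at h
        rw [hv0] at h
        rw [show (Fin.cons 1 x : Fin (s+1) → F) 0 = 1 from Fin.cons_zero _ _,
          show (Fin.cons 1 y : Fin (s+1) → F) 0 = 1 from Fin.cons_zero _ _,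
          mul_one, mul_one] at h
        exact h
      have hb : b = -a := eq_neg_of_add_eq_zero_right h00
      refine ⟨a, ?_⟩
      funext i
      have h := congrFun hab i
      simp only [Pi.add_apply, Pi.smul_apply, smul_eq_mul] at h
      rw [hb] at h
      show v i = a * D i
      rw [hD]
      ring_nf
      ring_nf at h
      linear_combination -h
    have hne : (Finset.univ.filter fun i => D i ≠ 0).Nonempty :=
      Finset.card_pos.mp (by omega)
    obtain ⟨i₀, hi₀f⟩ := hne
    have hi₀ : D i₀ ≠ 0 := (Finset.mem_filter.mp hi₀f).2
    have third : ∀ i j : Fin (s+1), ∃ k, D k ≠ 0 ∧ k ≠ i ∧ k ≠ j := by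
      intro i j
      have hcard : ((Finset.univ.filter fun i => D i ≠ 0) \ {i, j}).Nonempty := by
        rw [← Finset.card_pos]
        have h1 := Finset.card_le_card_sdiff_add_card
          (s := Finset.univ.filter fun i => D i ≠ 0) (t := ({i, j} : Finset (Fin (s+1))))
        have h2 : ({i, j} : Finset (Fin (s+1))).card ≤ 2 :=
          le_trans (Finset.card_insert_le _ _) (by rw [Finset.card_singleton])
        omega
      obtain ⟨k, hk⟩ := hcard
      rw [Finset.mem_sdiff, Finset.mem_filter, Finset.mem_insert, Finset.mem_singleton] at hk
      push_neg at hk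
      exact ⟨k, hk.1.2, hk.2.1, hk.2.2⟩
    have hnz : ∀ i : Fin (s+1), D i ≠ 0 → (Pi.single i (1:F) : Fin (s+1) → F) 0 = 0 := by
      intro i hi
      have hne0 : i ≠ 0 := fun h => hi (h ▸ hD0)
      exact Pi.single_eq_of_ne (Ne.symm hne0) 1
    set u₀ : (Fin (s+1) → F) ⧸ W := W.mkQ (Pi.single i₀ 1) with hu₀def
    have hsmulD : ∀ (a : F) (k : Fin (s+1)), (a • D) k = a * D k := fun a k => rfl
    have hu₀ : u₀ ≠ 0 := by
      intro h
      have hmem : (Pi.single i₀ (1:F) : Fin (s+1) → F) ∈ W :=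
        (Submodule.Quotient.mk_eq_zero W).mp h
      obtain ⟨a, ha⟩ := core _ hmem (hnz i₀ hi₀)
      obtain ⟨k, hk, hki₀, -⟩ := third i₀ i₀
      have h1 := congrFun ha k
      rw [Pi.single_eq_of_ne hki₀, hsmulD] at h1
      have ha0 : a = 0 := by
        rcases mul_eq_zero.mp h1.symm with h' | h'
        · exact h'
        · exact absurd h' hk
      rw [ha0, zero_smul] at ha
      have h2 := congrFun ha i₀
      rw [Pi.single_eq_same] at h2
      exact one_ne_zero h2
    have hother : ∀ i : Fin (s+1), D i ≠ 0 → i ≠ i₀ →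
        ¬∃ t : F, W.mkQ (Pi.single i 1) = t • u₀ := by
      rintro i hDi hii₀ ⟨t, ht⟩
      have hmem : (Pi.single i (1:F) : Fin (s+1) → F) - t • (Pi.single i₀ (1:F) : Fin (s+1) → F) ∈ W := by
        rw [← Submodule.Quotient.mk_eq_zero W]
        show W.mkQ _ = 0
        rw [map_sub, map_smul, ht, hu₀def, sub_self]
      have h00 : ((Pi.single i (1:F) : Fin (s+1) → F) - t • (Pi.single i₀ (1:F) : Fin (s+1) → F)) 0 = 0 := by
        show (Pi.single i (1:F) : Fin (s+1) → F) 0 - t * (Pi.single i₀ (1:F) : Fin (s+1) → F) 0 = 0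
        rw [hnz i hDi, hnz i₀ hi₀, mul_zero, sub_zero]
      obtain ⟨a, ha⟩ := core _ hmem h00
      obtain ⟨k, hk, hki, hki₀⟩ := third i i₀
      have h1 := congrFun ha k
      rw [hsmulD] at h1
      have hlhs : ((Pi.single i (1:F) : Fin (s+1) → F) - t • (Pi.single i₀ (1:F) : Fin (s+1) → F)) k = 0 := by
        show (Pi.single i (1:F) : Fin (s+1) → F) k - t * (Pi.single i₀ (1:F) : Fin (s+1) → F) k = 0
        rw [Pi.single_eq_of_ne hki, Pi.single_eq_of_ne hki₀, mul_zero, sub_zero]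
      rw [hlhs] at h1
      have ha0 : a = 0 := by
        rcases mul_eq_zero.mp h1.symm with h' | h'
        · exact h'
        · exact absurd h' hk
      rw [ha0, zero_smul] at ha
      have h2 := congrFun ha i
      have hlhs2 : ((Pi.single i (1:F) : Fin (s+1) → F) - t • (Pi.single i₀ (1:F) : Fin (s+1) → F)) i = 1 := by
        show (Pi.single i (1:F) : Fin (s+1) → F) i - t * (Pi.single i₀ (1:F) : Fin (s+1) → F) i = 1
        rw [Pi.single_eq_same, Pi.single_eq_of_ne hii₀, mul_zero, sub_zero]
      rw [hlhs2] at h2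
      exact one_ne_zero h2
    set L := wordFunctional (fun β : PA F (s+1) => coefAlong (F := F) u₀ (W.mkQ β.val)) with hL
    have hLr : L r = 0 := Rcomp_le_ker_wf W u₀ hu₀ (consProj x) hδW hr
    have hLr' : L r' = 0 := Rcomp_le_ker_wf W u₀ hu₀ (consProj y) hγW hr'
    have hv1 : L (bar (Fin.cons 1 x) - Pi.single (consProj x) 1)
        = ∑ i, (Fin.cons 1 x : Fin (s+1) → F) i * coefAlong (F := F) u₀ (W.mkQ (Pi.single i 1)) :=
      wf_coset_value W u₀ hu₀ (consProj x) hδW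
    have hv2 : L (bar (Fin.cons 1 y) - Pi.single (consProj y) 1)
        = ∑ i, (Fin.cons 1 y : Fin (s+1) → F) i * coefAlong (F := F) u₀ (W.mkQ (Pi.single i 1)) :=
      wf_coset_value W u₀ hu₀ (consProj y) hγW
    have e1 : L c = L r + L (bar (Fin.cons 1 x) - Pi.single (consProj x) 1) := by
      rw [← hc1, map_add]
    have e2 : L c = L r' + L (bar (Fin.cons 1 y) - Pi.single (consProj y) 1) := by
      rw [← hc2, map_add]
    rw [hLr, zero_add, hv1] at e1
    rw [hLr', zero_add, hv2] at e2
    have hcc := e1.symm.trans e2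
    have hsum : ∑ i, D i * coefAlong (F := F) u₀ (W.mkQ (Pi.single i 1)) = 0 := by
      have := sub_eq_zero.mpr hcc
      rw [← Finset.sum_sub_distrib] at this
      rw [← this]
      refine Finset.sum_congr rfl fun i _ => ?_
      rw [hD]
      ring
    rw [Finset.sum_eq_single i₀] at hsum
    · rw [← hu₀def, coefAlong_self hu₀, mul_one] at hsum
      exact hi₀ hsum
    · intro i _ hii₀
      by_cases hDi : D i = 0
      · rw [hDi, zero_mul]
      · rw [coefAlong_of_not (hother i hDi hii₀), mul_zero]
    · intro h
      exact absurd (Finset.mem_univ i₀) h
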